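/- For every σ > 0, let p_σ(x) denote the unique maximizer over p ∈ ℝ of A_σ(p; x) for x < 0. Then p_σ(x) = σ · m^{−1}(−x/σ), where m(p) = (1 − Φ(p)) / φ(p) is the standard Gaussian Mills ratio and m^{−1} its inverse; the map x ↦ p_σ(x) is strictly increasing on (−∞, 0), and p_σ(x) → −∞ as x → −∞. -/

import Mathlib

open MeasureTheory ProbabilityTheory Filter Set

/-- The standard normal density `φ`. -/
noncomputable def gaussPDF (t : ℝ) : ℝ := (Real.sqrt (2 * Real.pi))⁻¹ * Real.exp (-t ^ 2 / 2)

/-- The standard normal cumulative distribution function `Φ`. -/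
noncomputable def gaussCDF (p : ℝ) : ℝ := ∫ t in Iic p, gaussPDF t

/-- The standard Gaussian Mills ratio `m(p) = (1 − Φ(p))/φ(p)`. -/
noncomputable def mills (p : ℝ) : ℝ := (1 - gaussCDF p) / gaussPDF p

/-- `A_σ(p; x) = E[(p − x − σ·η)·1_{σ·η > p}]` with `η` standard normal. -/
noncomputable def Agauss (σ p x : ℝ) : ℝ :=
  ∫ t in {t : ℝ | σ * t > p}, (p - x - σ * t) ∂(gaussianReal 0 1)


lemma gaussPDF_eq (t : ℝ) : gaussPDF t = gaussianPDFReal 0 1 t := by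
  simp [gaussPDF, gaussianPDFReal, neg_div]

lemma gaussPDF_pos (t : ℝ) : 0 < gaussPDF t := by
  rw [gaussPDF_eq]; exact gaussianPDFReal_pos 0 1 t one_ne_zero

lemma continuous_gaussPDF : Continuous gaussPDF := by
  unfold gaussPDF; fun_prop

lemma integrable_gaussPDF : Integrable gaussPDF := by
  have := integrable_gaussianPDFReal 0 1
  exact this.congr (by filter_upwards with t using (gaussPDF_eq t).symm)

lemma integral_gaussPDF : ∫ t, gaussPDF t = 1 := by
  rw [integral_congr_ae (by filter_upwards with t using gaussPDF_eq t)]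
  exact integral_gaussianPDFReal_eq_one 0 one_ne_zero

lemma hasDerivAt_gaussPDF (t : ℝ) : HasDerivAt gaussPDF (-t * gaussPDF t) t := by
  have h : HasDerivAt (fun t : ℝ => Real.exp (-t ^ 2 / 2)) (-t * Real.exp (-t^2/2)) t := by
    have h1 : HasDerivAt (fun t : ℝ => -t ^ 2 / 2) (-t) t := by
      have := ((hasDerivAt_pow 2 t).neg).div_const 2
      refine this.congr_deriv ?_; push_cast; ring
    have := h1.exp
    convert this using 1; ring
  have := h.const_mul (Real.sqrt (2 * Real.pi))⁻¹
  refine (this.congr_deriv ?_ : HasDerivAt gaussPDF _ t)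
  · unfold gaussPDF; ring

lemma integrable_mul_gaussPDF : Integrable (fun t => t * gaussPDF t) := by
  have h := (integrable_mul_exp_neg_mul_sq (by norm_num : (0:ℝ) < 1/2)).const_mul
    (Real.sqrt (2 * Real.pi))⁻¹
  exact h.congr (by filter_upwards with t; unfold gaussPDF; ring_nf)

lemma tendsto_gaussPDF_atTop : Tendsto gaussPDF atTop (nhds 0) := by
  unfold gaussPDF
  rw [show (0:ℝ) = (Real.sqrt (2 * Real.pi))⁻¹ * 0 by ring]
  refine Tendsto.const_mul _ ?_
  refine Real.tendsto_exp_atBot.comp ?_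
  have : Tendsto (fun t : ℝ => t ^ 2) atTop atTop := tendsto_pow_atTop two_ne_zero
  have := (tendsto_neg_atBot_iff.mpr this).atBot_div_const (by norm_num : (0:ℝ) < 2)
  simpa [neg_div] using this

lemma tendsto_gaussPDF_atBot : Tendsto gaussPDF atBot (nhds 0) := by
  unfold gaussPDF
  rw [show (0:ℝ) = (Real.sqrt (2 * Real.pi))⁻¹ * 0 by ring]
  refine Tendsto.const_mul _ ?_
  refine Real.tendsto_exp_atBot.comp ?_
  have : Tendsto (fun t : ℝ => t ^ 2) atBot atTop := by
    have h2 := (tendsto_pow_atTop (n := 2) two_ne_zero).comp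
      (tendsto_neg_atBot_atTop : Tendsto (fun t : ℝ => -t) atBot atTop)
    exact h2.congr fun t => by simp [Function.comp, neg_sq]
  have := (tendsto_neg_atBot_iff.mpr this).atBot_div_const (by norm_num : (0:ℝ) < 2)
  simpa [neg_div] using this

lemma integral_Ioi_gaussPDF (a : ℝ) : ∫ t in Ioi a, gaussPDF t = 1 - gaussCDF a := by
  have h := integral_gaussPDF
  rw [← intervalIntegral.integral_Iic_add_Ioi (b := a) integrable_gaussPDF.integrableOn
    integrable_gaussPDF.integrableOn] at h
  unfold gaussCDF; linarith

lemma integral_Ioi_mul_gaussPDF (a : ℝ) : ∫ t in Ioi a, t * gaussPDF t = gaussPDF a := by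
  have h := integral_Ioi_of_hasDerivAt_of_tendsto
    (f := fun t => -gaussPDF t) (f' := fun t => t * gaussPDF t) (a := a)
    (continuous_gaussPDF.neg.continuousWithinAt)
    (fun t _ => by have := (hasDerivAt_gaussPDF t).neg; simp only [neg_mul, neg_neg] at this; exact this)
    integrable_mul_gaussPDF.integrableOn
    (by simpa using tendsto_gaussPDF_atTop.neg)
  simpa using h

lemma gaussCDF_lt_one (p : ℝ) : gaussCDF p < 1 := by
  have h : 0 < ∫ t in Ioi p, gaussPDF t := by
    rw [MeasureTheory.setIntegral_pos_iff_support_of_nonneg_ae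
      (by filter_upwards with t using (gaussPDF_pos t).le) integrable_gaussPDF.integrableOn]
    have : (Function.support gaussPDF) = Set.univ := by
      ext t; simp [Function.support, (gaussPDF_pos t).ne']
    rw [this]
    simp
  rw [integral_Ioi_gaussPDF] at h; linarith

lemma gaussCDF_pos (p : ℝ) : 0 < gaussCDF p := by
  unfold gaussCDF
  rw [MeasureTheory.setIntegral_pos_iff_support_of_nonneg_ae
    (by filter_upwards with t using (gaussPDF_pos t).le) integrable_gaussPDF.integrableOn]
  have : (Function.support gaussPDF) = Set.univ := by
    ext t; simp [Function.support, (gaussPDF_pos t).ne']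
  rw [this]
  simp

lemma monotone_gaussCDF : Monotone gaussCDF := by
  intro a b hab
  exact setIntegral_mono_set integrable_gaussPDF.integrableOn
    (by filter_upwards with t using (gaussPDF_pos t).le)
    (HasSubset.Subset.eventuallyLE (Iic_subset_Iic.mpr hab))

lemma hasDerivAt_gaussCDF (p : ℝ) : HasDerivAt gaussCDF (gaussPDF p) p := by
  have heq : ∀ q : ℝ, gaussCDF q = gaussCDF 0 + ∫ t in (0:ℝ)..q, gaussPDF t := by
    intro q
    rw [← intervalIntegral.integral_Iic_sub_Iic integrable_gaussPDF.integrableOn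
      integrable_gaussPDF.integrableOn]
    unfold gaussCDF; ring
  have h : HasDerivAt (fun q => gaussCDF 0 + ∫ t in (0:ℝ)..q, gaussPDF t) (gaussPDF p) p := by
    refine HasDerivAt.const_add _ ?_
    exact intervalIntegral.integral_hasDerivAt_right
      (integrable_gaussPDF.intervalIntegrable)
      (continuous_gaussPDF.stronglyMeasurableAtFilter _ _)
      continuous_gaussPDF.continuousAt
  exact h.congr_of_eventuallyEq (by filter_upwards with q using heq q)

lemma mills_pos (p : ℝ) : 0 < mills p :=
  div_pos (by linarith [gaussCDF_lt_one p]) (gaussPDF_pos p)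

lemma mills_le (p : ℝ) (hp : 0 < p) : p * (1 - gaussCDF p) ≤ gaussPDF p := by
  have h : ∫ t in Ioi p, gaussPDF t ≤ ∫ t in Ioi p, t * gaussPDF t / p := by
    refine setIntegral_mono_on integrable_gaussPDF.integrableOn
      ((integrable_mul_gaussPDF.div_const p).integrableOn) measurableSet_Ioi ?_
    intro t ht
    rw [mem_Ioi] at ht
    have h1 : (1:ℝ) ≤ t / p := (one_le_div hp).mpr ht.le
    have h2 := gaussPDF_pos t
    have h3 : gaussPDF t * 1 ≤ gaussPDF t * (t / p) := mul_le_mul_of_nonneg_left h1 h2.le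
    calc gaussPDF t = gaussPDF t * 1 := by ring
      _ ≤ gaussPDF t * (t / p) := h3
      _ = t * gaussPDF t / p := by ring
  have h2 : ∫ t in Ioi p, t * gaussPDF t / p = gaussPDF p / p := by
    rw [integral_div, integral_Ioi_mul_gaussPDF p]
  rw [integral_Ioi_gaussPDF, h2] at h
  have h3 := mul_le_mul_of_nonneg_left h hp.le
  calc p * (1 - gaussCDF p) ≤ p * (gaussPDF p / p) := h3
    _ = gaussPDF p := by field_simp

lemma hasDerivAt_oneSubCDF (p : ℝ) :
    HasDerivAt (fun q => 1 - gaussCDF q) (-gaussPDF p) p := by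
  simpa using (hasDerivAt_gaussCDF p).const_sub 1

lemma mills_lt (p : ℝ) : p * (1 - gaussCDF p) < gaussPDF p := by
  rcases le_or_gt p 0 with hp | hp
  · have := gaussCDF_lt_one p
    nlinarith [gaussPDF_pos p]
  · set g : ℝ → ℝ := fun q => gaussPDF q - q * (1 - gaussCDF q) with hg
    have hderiv : ∀ q : ℝ, HasDerivAt g (-(1 - gaussCDF q)) q := by
      intro q
      have h2 := (hasDerivAt_id q).mul (hasDerivAt_oneSubCDF q)
      have := (hasDerivAt_gaussPDF q).sub h2
      refine (this.congr_deriv ?_ : HasDerivAt g _ q)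
      simp only [id]; ring
    have hcont : Continuous g := by
      have : Differentiable ℝ g := fun q => (hderiv q).differentiableAt
      exact this.continuous
    have hanti : StrictAntiOn g (Ici 0) := by
      refine strictAntiOn_of_deriv_neg (convex_Ici 0) hcont.continuousOn ?_
      intro q hq
      rw [(hderiv q).deriv]
      linarith [gaussCDF_lt_one q]
    have hge : ∀ q : ℝ, 0 < q → 0 ≤ g q := by
      intro q hq
      have := mills_le q hq
      simp only [hg]; linarith
    have h1 : g (p + 1) < g p := hanti (le_of_lt hp) (by positivity : (0:ℝ) < p+1).le (by linarith)
    have h2 := hge (p+1) (by linarith)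
    have : 0 < g p := lt_of_le_of_lt h2 h1
    simp only [hg] at this; linarith

lemma hasDerivAt_mills (p : ℝ) : HasDerivAt mills (p * mills p - 1) p := by
  have h := (hasDerivAt_oneSubCDF p).div (hasDerivAt_gaussPDF p) (gaussPDF_pos p).ne'
  refine (h.congr_deriv ?_ : HasDerivAt mills _ p)
  unfold mills
  have hφ := (gaussPDF_pos p).ne'
  field_simp
  ring

lemma strictAnti_mills : StrictAnti mills := by
  refine strictAnti_of_deriv_neg ?_
  · intro p
    rw [(hasDerivAt_mills p).deriv]
    have h := mills_lt p
    have hφ := gaussPDF_pos p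
    have : p * mills p < 1 := by
      unfold mills
      rw [← mul_div_assoc, div_lt_one hφ]
      exact mills_lt p
    linarith

lemma continuous_mills : Continuous mills :=
  (Differentiable.continuous fun p => (hasDerivAt_mills p).differentiableAt)

lemma tendsto_mills_atBot : Tendsto mills atBot atTop := by
  have hc : 0 < 1 - gaussCDF 0 := by linarith [gaussCDF_lt_one 0]
  have hden : Tendsto (fun p => (gaussPDF p)⁻¹) atBot atTop := by
    refine tendsto_inv_nhdsGT_zero.comp ?_
    rw [tendsto_nhdsWithin_iff]
    exact ⟨tendsto_gaussPDF_atBot, by filter_upwards with p using gaussPDF_pos p⟩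
  have hmul : Tendsto (fun p => (1 - gaussCDF 0) * (gaussPDF p)⁻¹) atBot atTop :=
    hden.const_mul_atTop hc
  refine tendsto_atTop_mono' atBot ?_ hmul
  filter_upwards [eventually_le_atBot (0:ℝ)] with p hp
  unfold mills
  rw [div_eq_mul_inv]
  have h1 : 1 - gaussCDF 0 ≤ 1 - gaussCDF p := by linarith [monotone_gaussCDF hp]
  exact mul_le_mul_of_nonneg_right h1 (inv_nonneg.mpr (gaussPDF_pos p).le)

lemma tendsto_mills_atTop : Tendsto mills atTop (nhds 0) := by
  refine tendsto_of_tendsto_of_tendsto_of_le_of_le' tendsto_const_nhds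
    tendsto_inv_atTop_zero ?_ ?_
  · filter_upwards with p using (mills_pos p).le
  · filter_upwards [eventually_gt_atTop (0:ℝ)] with p hp
    have h := mills_le p hp
    have hφ := gaussPDF_pos p
    unfold mills
    rw [div_le_iff₀ hφ, inv_mul_eq_div, le_div_iff₀ hp]
    linarith

lemma mills_surj {y : ℝ} (hy : 0 < y) : ∃ p, mills p = y := by
  obtain ⟨a, ha⟩ : ∃ a, y < mills a := by
    have := tendsto_mills_atBot.eventually_gt_atTop y
    exact ⟨this.exists.choose, this.exists.choose_spec⟩
  obtain ⟨b, hb⟩ : ∃ b, mills b < y := by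
    exact (tendsto_mills_atTop.eventually_lt_const hy).exists
  have hab : a ≤ b := by
    by_contra hcon
    push_neg at hcon
    exact absurd (strictAnti_mills hcon) (by linarith)
  have hIcc : y ∈ Icc (mills b) (mills a) := ⟨hb.le, ha.le⟩
  obtain ⟨p, _, hp⟩ := intermediate_value_Icc' hab continuous_mills.continuousOn hIcc
  exact ⟨p, hp⟩

lemma set_eq_Ioi {σ p : ℝ} (hσ : 0 < σ) : {t : ℝ | σ * t > p} = Ioi (p / σ) := by
  ext t
  simp only [mem_setOf_eq, mem_Ioi, gt_iff_lt]
  rw [div_lt_iff₀ hσ, mul_comm]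

lemma integrable_linear_gaussPDF (c d : ℝ) :
    Integrable (fun t => (c + d * t) * gaussPDF t) := by
  have h := (integrable_gaussPDF.const_mul c).add (integrable_mul_gaussPDF.const_mul d)
  exact h.congr (by filter_upwards with t; simp only [Pi.add_apply]; ring)

lemma setIntegral_gaussianReal (s : Set ℝ) (hs : MeasurableSet s) (f : ℝ → ℝ) :
    ∫ t in s, f t ∂(gaussianReal 0 1) = ∫ t in s, gaussPDF t * f t := by
  rw [gaussianReal_of_var_ne_zero 0 one_ne_zero]
  have hmeas : Measurable fun t => (gaussianPDFReal 0 1 t).toNNReal :=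
    (measurable_gaussianPDFReal 0 1).real_toNNReal
  have hd : (gaussianPDF 0 1) = fun t => (((gaussianPDFReal 0 1 t).toNNReal) : ENNReal) := by
    ext t
    rfl
  rw [hd, setIntegral_withDensity_eq_setIntegral_smul hmeas f hs]
  refine setIntegral_congr_fun hs fun t _ => ?_
  rw [NNReal.smul_def, smul_eq_mul, Real.coe_toNNReal _ (gaussianPDFReal_nonneg 0 1 t),
    gaussPDF_eq]

lemma Agauss_eq (σ p x : ℝ) (hσ : 0 < σ) :
    Agauss σ p x = (p - x) * (1 - gaussCDF (p / σ)) - σ * gaussPDF (p / σ) := by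
  unfold Agauss
  rw [set_eq_Ioi hσ, setIntegral_gaussianReal _ measurableSet_Ioi]
  have h1 : ∀ t : ℝ, gaussPDF t * (p - x - σ * t)
      = (p - x) * gaussPDF t - σ * (t * gaussPDF t) := by intro t; ring
  rw [setIntegral_congr_fun measurableSet_Ioi fun t _ => h1 t]
  rw [integral_sub ((integrable_gaussPDF.const_mul (p - x)).integrableOn)
    ((integrable_mul_gaussPDF.const_mul σ).integrableOn),
    integral_const_mul, integral_const_mul, integral_Ioi_gaussPDF, integral_Ioi_mul_gaussPDF]

lemma gaussPDF_mul_mills (a : ℝ) : gaussPDF a * mills a = 1 - gaussCDF a := by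
  unfold mills
  rw [mul_div_cancel₀ _ (gaussPDF_pos a).ne']

lemma hasDerivAt_Agauss (σ x : ℝ) (hσ : 0 < σ) (p : ℝ) :
    HasDerivAt (fun q => Agauss σ q x)
      (gaussPDF (p / σ) * (mills (p / σ) + x / σ)) p := by
  have hdiv : HasDerivAt (fun q : ℝ => q / σ) (1 / σ) p := by
    simpa using (hasDerivAt_id p).div_const σ
  have h1 : HasDerivAt (fun q => 1 - gaussCDF (q / σ)) (-gaussPDF (p / σ) * (1 / σ)) p :=
    by have := (hasDerivAt_oneSubCDF (p / σ)).comp p hdiv; exact this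
  have h2 : HasDerivAt (fun q : ℝ => (q - x) * (1 - gaussCDF (q / σ)))
      (1 * (1 - gaussCDF (p / σ)) + (p - x) * (-gaussPDF (p / σ) * (1 / σ))) p :=
    ((hasDerivAt_id p).sub_const x).mul h1
  have h3 : HasDerivAt (fun q : ℝ => σ * gaussPDF (q / σ))
      (σ * (-(p / σ) * gaussPDF (p / σ) * (1 / σ))) p :=
    by have := (((hasDerivAt_gaussPDF (p / σ)).comp p hdiv)).const_mul σ; exact this
  have h4 := h2.sub h3
  have heq : (fun q => Agauss σ q x)
      = fun q => (q - x) * (1 - gaussCDF (q / σ)) - σ * gaussPDF (q / σ) := by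
    ext q; exact Agauss_eq σ q x hσ
  rw [heq]
  refine h4.congr_deriv ?_
  rw [mul_add, gaussPDF_mul_mills]
  field_simp
  ring

lemma Agauss_max (σ x : ℝ) (hσ : 0 < σ) (pstar : ℝ)
    (hstar : mills (pstar / σ) = -x / σ) :
    ∀ p : ℝ, p ≠ pstar → Agauss σ p x < Agauss σ pstar x := by
  set f : ℝ → ℝ := fun q => Agauss σ q x with hf
  have hcont : Continuous f :=
    Differentiable.continuous fun q => (hasDerivAt_Agauss σ x hσ q).differentiableAt
  have hderiv : ∀ q : ℝ, deriv f q = gaussPDF (q / σ) * (mills (q / σ) + x / σ) :=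
    fun q => (hasDerivAt_Agauss σ x hσ q).deriv
  have hmono : StrictMonoOn f (Iic pstar) := by
    refine strictMonoOn_of_deriv_pos (convex_Iic _) hcont.continuousOn ?_
    intro q hq
    rw [interior_Iic, mem_Iio] at hq
    rw [hderiv q]
    have h1 : mills (pstar / σ) < mills (q / σ) :=
      strictAnti_mills ((div_lt_div_iff_of_pos_right hσ).mpr hq)
    rw [hstar, neg_div] at h1
    have := gaussPDF_pos (q / σ)
    exact mul_pos this (by linarith)
  have hanti : StrictAntiOn f (Ici pstar) := by
    refine strictAntiOn_of_deriv_neg (convex_Ici _) hcont.continuousOn ?_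
    intro q hq
    rw [interior_Ici, mem_Ioi] at hq
    rw [hderiv q]
    have h1 : mills (q / σ) < mills (pstar / σ) :=
      strictAnti_mills ((div_lt_div_iff_of_pos_right hσ).mpr hq)
    rw [hstar, neg_div] at h1
    have := gaussPDF_pos (q / σ)
    exact mul_neg_of_pos_of_neg this (by linarith)
  intro p hp
  rcases lt_or_gt_of_ne hp with h | h
  · exact hmono (mem_Iic.mpr h.le) (mem_Iic.mpr le_rfl) h
  · exact hanti (mem_Ici.mpr le_rfl) (mem_Ici.mpr h.le) h

/-- Property (ii) in the proof of the paper's Lemma 6.3: for `σ > 0` there is a map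
`p_σ` such that for each `x < 0`, `p_σ(x)` is the unique maximizer of `p ↦ A_σ(p; x)`,
it satisfies `m(p_σ(x)/σ) = −x/σ` (i.e. `p_σ(x) = σ·m⁻¹(−x/σ)`, the inverse `minv` of the
Mills ratio being exhibited explicitly), `p_σ` is strictly increasing on `(−∞, 0)`, and
`p_σ(x) → −∞` as `x → −∞`. -/
theorem stmt7 (σ : ℝ) (hσ : 0 < σ) :
    ∃ pσ : ℝ → ℝ, ∃ minv : ℝ → ℝ,
      (∀ p : ℝ, minv (mills p) = p) ∧
      (∀ y > (0 : ℝ), mills (minv y) = y) ∧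
      (∀ x < (0 : ℝ),
        (∀ p : ℝ, Agauss σ p x ≤ Agauss σ (pσ x) x) ∧
        (∀ q : ℝ, (∀ p : ℝ, Agauss σ p x ≤ Agauss σ q x) → q = pσ x) ∧
        pσ x = σ * minv (-x / σ)) ∧
      StrictMonoOn pσ (Iio 0) ∧
      Tendsto pσ atBot atBot := by
  classical
  set minv : ℝ → ℝ := fun y => if h : ∃ p, mills p = y then h.choose else 0 with hminv
  have hleft : ∀ p, minv (mills p) = p := by
    intro p
    have h : ∃ q, mills q = mills p := ⟨p, rfl⟩
    simp only [hminv, dif_pos h]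
    exact strictAnti_mills.injective h.choose_spec
  have hright : ∀ y, 0 < y → mills (minv y) = y := by
    intro y hy
    have h := mills_surj hy
    simp only [hminv, dif_pos h]
    exact h.choose_spec
  refine ⟨fun x => σ * minv (-x / σ), minv, hleft, fun y hy => hright y hy, ?_, ?_, ?_⟩
  · intro x hx
    have hy : 0 < -x / σ := div_pos (by linarith) hσ
    have hstar : mills (σ * minv (-x / σ) / σ) = -x / σ := by
      rw [mul_div_cancel_left₀ _ hσ.ne']
      exact hright _ hy
    have hmax := Agauss_max σ x hσ (σ * minv (-x / σ)) hstar
    refine ⟨?_, ?_, rfl⟩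
    · intro p
      rcases eq_or_ne p (σ * minv (-x / σ)) with h | h
      · rw [h]
      · exact (hmax p h).le
    · intro q hq
      by_contra h
      have h1 := hmax q h
      have h2 := hq (σ * minv (-x / σ))
      linarith
  · intro x₁ h₁ x₂ h₂ h12
    rw [mem_Iio] at h₁ h₂
    have hy₁ : 0 < -x₁ / σ := div_pos (by linarith) hσ
    have hy₂ : 0 < -x₂ / σ := div_pos (by linarith) hσ
    have hlt : -x₂ / σ < -x₁ / σ := by
      apply div_lt_div_of_pos_right ?_ hσ
      · linarith
    have hm : minv (-x₁ / σ) < minv (-x₂ / σ) := by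
      by_contra hcon
      push_neg at hcon
      have h3 := strictAnti_mills.antitone hcon
      rw [hright _ hy₁, hright _ hy₂] at h3
      linarith
    simpa using mul_lt_mul_of_pos_left hm hσ
  · rw [tendsto_atBot]
    intro b
    filter_upwards [eventually_le_atBot (-(σ * mills (b / σ)))] with x hx
    have hmb : 0 < mills (b / σ) := mills_pos _
    have hy : mills (b / σ) ≤ -x / σ := by
      rw [le_div_iff₀ hσ]
      nlinarith
    have hy0 : 0 < -x / σ := lt_of_lt_of_le hmb hy
    have hle : minv (-x / σ) ≤ b / σ := by
      by_contra hcon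
      push_neg at hcon
      have h3 := strictAnti_mills hcon
      rw [hright _ hy0] at h3
      linarith
    calc σ * minv (-x / σ) ≤ σ * (b / σ) := mul_le_mul_of_nonneg_left hle hσ.le
      _ = b := by field_simp
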